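/- If a family 𝒯 of subsets of a finite set U with the strict-superset edge relation forms a multitree, then for any σ ∈ 𝒯, the sets in 𝒯 that are subsets of σ, ordered by strict containment with covering edges, form a tree rooted at σ whose leaves are the singletons of elements of σ (assuming all singletons of elements of σ lie in 𝒯). -/

import Mathlib

/-- Covering edge of the projection signature graph: `τ₂` is a child of `τ₁`. -/
def CovEdge {U : Type*} (𝒯 : Set (Set U)) (τ₁ τ₂ : Set U) : Prop :=
  τ₁ ∈ 𝒯 ∧ τ₂ ∈ 𝒯 ∧ τ₂ ⊂ τ₁ ∧ ¬ ∃ τ₃ ∈ 𝒯, τ₂ ⊂ τ₃ ∧ τ₃ ⊂ τ₁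

/-- There is a covering child of `σ` containing any strict subset `τ` in `𝒯`. -/
lemma exists_cov_child {U : Type*} [Finite U] (𝒯 : Set (Set U))
    {σ τ : Set U} (hσ : σ ∈ 𝒯) (hτ : τ ∈ 𝒯) (hss : τ ⊂ σ) :
    ∃ c, CovEdge 𝒯 σ c ∧ τ ⊆ c := by
  have hfin : {x : Set U | x ∈ 𝒯 ∧ τ ⊆ x ∧ x ⊂ σ}.Finite := Set.toFinite _
  have hnonempty : {x : Set U | x ∈ 𝒯 ∧ τ ⊆ x ∧ x ⊂ σ}.Nonempty :=
    ⟨τ, hτ, subset_rfl, hss⟩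
  obtain ⟨c, ⟨hc𝒯, hτc, hcσ⟩, hmax⟩ :=
    Set.Finite.exists_maximalFor id _ hfin hnonempty
  refine ⟨c, ⟨hσ, hc𝒯, hcσ, ?_⟩, hτc⟩
  rintro ⟨τ₃, h₃𝒯, hc₃, h₃σ⟩
  have := hmax ⟨h₃𝒯, hτc.trans hc₃.le, h₃σ⟩ hc₃.le
  exact hc₃.2 this

lemma reach_aux {U : Type*} [Finite U] (𝒯 : Set (Set U)) :
    ∀ n : ℕ, ∀ σ ∈ 𝒯, σ.ncard ≤ n → ∀ τ ∈ 𝒯, τ ⊆ σ →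
      Relation.ReflTransGen (CovEdge 𝒯) σ τ := by
  intro n
  induction n with
  | zero =>
    intro σ hσ hcard τ hτ hsub
    have : σ = ∅ := by
      have := Set.ncard_eq_zero (Set.toFinite σ) |>.mp (Nat.le_zero.mp hcard)
      exact this
    have : τ = σ := by
      subst this; exact Set.subset_empty_iff.mp hsub
    subst this; exact Relation.ReflTransGen.refl
  | succ n ih =>
    intro σ hσ hcard τ hτ hsub
    rcases eq_or_ne τ σ with rfl | hne
    · exact Relation.ReflTransGen.refl
    · have hss : τ ⊂ σ := ⟨hsub, fun h => hne (subset_antisymm hsub h)⟩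
      obtain ⟨c, hcov, hτc⟩ := exists_cov_child 𝒯 hσ hτ hss
      have hclt : c.ncard < σ.ncard :=
        Set.ncard_lt_ncard hcov.2.2.1 (Set.toFinite σ)
      have : c.ncard ≤ n := by omega
      exact (ih c hcov.2.1 this τ hτ hτc).head hcov

/-- If the projection signature graph is a multitree, then for any σ ∈ 𝒯 the nodes
of 𝒯 below σ form a tree rooted at σ (all reachable from σ, with unique paths,
expressed as unique parents among the reachable nodes), whose leaves are exactly the
singletons of elements of σ. -/
theorem multitree_dominated_tree {U : Type*} [Finite U] (𝒯 : Set (Set U))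
    (hne : ∀ s ∈ 𝒯, s.Nonempty) (hsing : ∀ u : U, {u} ∈ 𝒯)
    (hmt : ∀ v w u₁ u₂ : Set U,
      Relation.ReflTransGen (CovEdge 𝒯) v u₁ → Relation.ReflTransGen (CovEdge 𝒯) v u₂ →
      CovEdge 𝒯 u₁ w → CovEdge 𝒯 u₂ w → u₁ = u₂)
    (σ : Set U) (hσ : σ ∈ 𝒯) :
    (∀ τ ∈ 𝒯, τ ⊆ σ → Relation.ReflTransGen (CovEdge 𝒯) σ τ) ∧
    (∀ τ₁ τ₂, τ₁ ⊆ σ → τ₂ ⊆ σ → τ₁ ∈ 𝒯 → τ₂ ∈ 𝒯 →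
      ∀ u₁ u₂, Relation.ReflTransGen (CovEdge 𝒯) σ u₁ →
        Relation.ReflTransGen (CovEdge 𝒯) σ u₂ →
        CovEdge 𝒯 u₁ τ₂ → CovEdge 𝒯 u₂ τ₂ → u₁ = u₂) ∧
    (∀ τ ∈ 𝒯, τ ⊆ σ → ((¬ ∃ τ', CovEdge 𝒯 τ τ') ↔ ∃ u ∈ σ, τ = {u})) := by
  refine ⟨fun τ hτ hsub => reach_aux 𝒯 σ.ncard σ hσ le_rfl τ hτ hsub, ?_, ?_⟩
  · intro τ₁ τ₂ _ _ _ _ u₁ u₂ h1 h2 h3 h4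
    exact hmt σ τ₂ u₁ u₂ h1 h2 h3 h4
  · intro τ hτ hsub
    constructor
    · intro hnoc
      obtain ⟨u, hu⟩ := hne τ hτ
      refine ⟨u, hsub hu, ?_⟩
      by_contra hne'
      have hss : ({u} : Set U) ⊂ τ := by
        refine ⟨Set.singleton_subset_iff.mpr hu, fun h => hne' ?_⟩
        exact subset_antisymm (Set.singleton_subset_iff.mpr hu) h |>.symm ▸ rfl
      obtain ⟨c, hcov, _⟩ := exists_cov_child 𝒯 hτ (hsing u) hss
      exact hnoc ⟨c, hcov⟩
    · rintro ⟨u, hu, rfl⟩ ⟨τ', _, hτ'𝒯, hss, _⟩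
      obtain ⟨x, hx⟩ := hne τ' hτ'𝒯
      have : x = u := hss.1 hx
      subst this
      exact hss.2 (Set.singleton_subset_iff.mpr hx)
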